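/- Let R be a Noetherian reduced ring with exactly two minimal primes 𝔭₁, 𝔭₂, and assume that the quotient rings R/𝔭₁ and R/𝔭₂ are integrally closed (normal) domains. Then R is strictly closed (its integral closure in Q(R) being R̄ = R/𝔭₁ × R/𝔭₂ via the diagonal embedding), and hence R is a weakly Arf ring. -/

import Mathlib

open scoped TensorProduct

/-- `R` is a weakly Arf ring. -/
def IsWeaklyArf (R : Type*) [CommRing R] : Prop :=
  ∀ x y z : R, x ∈ nonZeroDivisors R →
    (∃ u ∈ integralClosure R (FractionRing R),
        u * algebraMap R (FractionRing R) x = algebraMap R (FractionRing R) y) →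
    (∃ v ∈ integralClosure R (FractionRing R),
        v * algebraMap R (FractionRing R) x = algebraMap R (FractionRing R) z) →
    ∃ r : R, algebraMap R (FractionRing R) r * algebraMap R (FractionRing R) x
        = algebraMap R (FractionRing R) (y * z)

/-- `R` is strictly closed in the `R`-algebra `S`. -/
def IsStrictlyClosedIn (R S : Type*) [CommRing R] [CommRing S] [Algebra R S] : Prop :=
  ∀ s : S, s ⊗ₜ[R] (1 : S) = (1 : S) ⊗ₜ[R] s → s ∈ (algebraMap R S).range

/-- `R` is strictly closed (in the integral closure `R̄` of `R` in its total ring of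
fractions `Q(R)`). -/
def IsStrictlyClosed (R : Type*) [CommRing R] : Prop :=
  IsStrictlyClosedIn R (integralClosure R (FractionRing R))



set_option synthInstance.maxHeartbeats 1000000 in
set_option maxHeartbeats 2000000 in
theorem isWeaklyArf_of_isStrictlyClosed (R : Type*) [CommRing R]
    (h : IsStrictlyClosed R) : IsWeaklyArf R := by
  rintro x y z hx ⟨u, hu, hux⟩ ⟨v, hv, hvx⟩
  let S : Subalgebra R (FractionRing R) := integralClosure R (FractionRing R)
  let U : S := ⟨u, hu⟩
  let V : S := ⟨v, hv⟩
  have hval : ∀ (r : R) (w : S),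
      ((r • w : S) : FractionRing R) = algebraMap R (FractionRing R) r * (w : FractionRing R) := by
    intro r w
    rw [Subalgebra.coe_smul, Algebra.smul_def]
  have h1 : (z • (1 : S) : S) = x • V := Subtype.ext (by
    rw [hval, hval]
    show algebraMap R (FractionRing R) z * 1 = algebraMap R (FractionRing R) x * v
    rw [← hvx]; ring)
  have h2 : (x • U : S) = y • (1 : S) := Subtype.ext (by
    rw [hval, hval]
    show algebraMap R (FractionRing R) x * u = algebraMap R (FractionRing R) y * 1
    rw [← hux]; ring)
  have h3 : (y • V : S) = z • U := Subtype.ext (by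
    rw [hval, hval]
    show algebraMap R (FractionRing R) y * v = algebraMap R (FractionRing R) z * u
    rw [← hux, ← hvx]; ring)
  have key : (z • U) ⊗ₜ[R] (1 : S) = (1 : S) ⊗ₜ[R] (z • U) := by
    calc (z • U) ⊗ₜ[R] (1 : S)
        = U ⊗ₜ[R] (z • (1 : S)) := TensorProduct.smul_tmul _ _ _
      _ = U ⊗ₜ[R] (x • V) := by rw [h1]
      _ = (x • U) ⊗ₜ[R] V := (TensorProduct.smul_tmul _ _ _).symm
      _ = (y • (1 : S)) ⊗ₜ[R] V := by rw [h2]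
      _ = (1 : S) ⊗ₜ[R] (y • V) := TensorProduct.smul_tmul _ _ _
      _ = (1 : S) ⊗ₜ[R] (z • U) := by rw [h3]
  obtain ⟨r, hr⟩ := h (z • U) key
  refine ⟨r, ?_⟩
  have hrK : algebraMap R (FractionRing R) r = ((z • U : S) : FractionRing R) := by
    rw [← hr]; rfl
  rw [hrK, hval]
  show algebraMap R (FractionRing R) z * u * algebraMap R (FractionRing R) x
      = algebraMap R (FractionRing R) (y * z)
  rw [map_mul, mul_assoc, hux]
  ring


set_option maxHeartbeats 2000000 in
set_option synthInstance.maxHeartbeats 1000000 in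
theorem aux_alghom (R : Type*) [CommRing R] (p q : Ideal R) (hp : p.IsPrime)
    (hpq : p ⊓ q = ⊥) (c : R) (hcq : c ∈ q) (hcp : c ∉ p)
    (hic : IsIntegrallyClosed (R ⧸ p)) :
    ∃ f : integralClosure R (FractionRing R) →ₐ[R] R ⧸ p,
      ∀ (s : integralClosure R (FractionRing R)) (a : R), f s = Ideal.Quotient.mk p a →
        algebraMap R (FractionRing R) c * (s : FractionRing R)
          = algebraMap R (FractionRing R) (c * a) := by
  haveI := hp
  haveI := hic
  have hJinj : Function.Injective (algebraMap (R ⧸ p) (FractionRing (R ⧸ p))) :=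
    IsFractionRing.injective _ _
  have hcz : ∀ w ∈ p, c * w = 0 := by
    intro w hw
    have : c * w ∈ p ⊓ q := ⟨Ideal.mul_mem_left p c hw, Ideal.mul_mem_right w q hcq⟩
    rwa [hpq, Ideal.mem_bot] at this
  have hcne : c ≠ 0 := fun h => hcp (h ▸ p.zero_mem)
  set ρ : R →+* FractionRing (R ⧸ p) :=
    (algebraMap (R ⧸ p) (FractionRing (R ⧸ p))).comp (Ideal.Quotient.mk p) with hρdef
  have hρunits : ∀ t : nonZeroDivisors R, IsUnit (ρ t) := by
    rintro ⟨t, ht⟩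
    have htp : t ∉ p := by
      intro htp
      exact hcne ((mem_nonZeroDivisors_iff_right.mp ht) c (hcz t htp))
    have h1 : Ideal.Quotient.mk p t ≠ 0 := fun h0 =>
      htp (Ideal.Quotient.eq_zero_iff_mem.mp h0)
    have h2 : ρ t ≠ 0 := by
      simp only [hρdef, RingHom.coe_comp, Function.comp_apply]
      intro h0
      exact h1 (hJinj (by rw [h0, map_zero]))
    exact isUnit_iff_ne_zero.mpr h2
  set ℓ : FractionRing R →+* FractionRing (R ⧸ p) :=
    IsLocalization.lift (M := nonZeroDivisors R) hρunits with hℓdef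
  have hℓa : ∀ r : R, ℓ (algebraMap R (FractionRing R) r) = ρ r := fun r =>
    IsLocalization.lift_eq hρunits r
  have hker : ∀ w : FractionRing R, ℓ w = 0 →
      algebraMap R (FractionRing R) c * w = 0 := by
    intro w hw
    obtain ⟨⟨yy, t⟩, rfl⟩ := IsLocalization.mk'_surjective (nonZeroDivisors R) w
    have h0 : ρ yy = ρ t * 0 := (IsLocalization.lift_mk'_spec _ _ _ _).mp hw
    rw [mul_zero] at h0
    have hmk : Ideal.Quotient.mk p yy = 0 := hJinj (by rw [map_zero]; exact h0)
    have hyyp : yy ∈ p := Ideal.Quotient.eq_zero_iff_mem.mp hmk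
    rw [IsLocalization.mul_mk'_eq_mk'_of_mul, hcz yy hyyp, IsLocalization.mk'_zero]
  have hmem : ∀ s : integralClosure R (FractionRing R),
      ∃ d : R ⧸ p, algebraMap (R ⧸ p) (FractionRing (R ⧸ p)) d = ℓ ↑s := by
    intro s
    obtain ⟨P, Pmon, Pev⟩ := s.2
    have hint : IsIntegral (R ⧸ p) (ℓ ↑s) := by
      refine ⟨P.map (Ideal.Quotient.mk p), Pmon.map _, ?_⟩
      rw [Polynomial.eval₂_map]
      have hcomp : (algebraMap (R ⧸ p) (FractionRing (R ⧸ p))).comp (Ideal.Quotient.mk p)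
          = ℓ.comp (algebraMap R (FractionRing R)) := RingHom.ext fun r => (hℓa r).symm
      rw [hcomp, ← Polynomial.hom_eval₂, Pev, map_zero]
    exact IsIntegrallyClosed.isIntegral_iff.mp hint
  set Sval : integralClosure R (FractionRing R) →+* FractionRing R :=
    ((integralClosure R (FractionRing R)).val : _ →ₐ[R] _).toRingHom with hSval
  set f₀ := (ℓ.comp Sval).codRestrict
      (algebraMap (R ⧸ p) (FractionRing (R ⧸ p))).range
      (fun s => by obtain ⟨d, hd⟩ := hmem s; exact ⟨d, hd⟩) with hf₀
  set e := RingEquiv.ofLeftInverse (f := algebraMap (R ⧸ p) (FractionRing (R ⧸ p)))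
      (g := Function.invFun (algebraMap (R ⧸ p) (FractionRing (R ⧸ p))))
      (Function.leftInverse_invFun hJinj) with he
  set fRH := (e.symm.toRingHom).comp f₀ with hfRH
  have hfJ : ∀ s : integralClosure R (FractionRing R),
      algebraMap (R ⧸ p) (FractionRing (R ⧸ p)) (fRH s) = ℓ ↑s := by
    intro s
    have h1 := RingEquiv.ofLeftInverse_apply (Function.leftInverse_invFun hJinj)
      (e.symm (f₀ s))
    rw [show RingEquiv.ofLeftInverse (Function.leftInverse_invFun hJinj) = e from rfl,
      e.apply_symm_apply] at h1
    have : (↑(f₀ s) : FractionRing (R ⧸ p)) = ℓ ↑s := rfl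
    rw [hfRH]
    simpa [this] using h1.symm
  have hsmul : ∀ (r : R) (s : integralClosure R (FractionRing R)),
      fRH (r • s) = r • fRH s := by
    intro r s
    apply hJinj
    rw [hfJ, Subalgebra.coe_smul, Algebra.smul_def, map_mul, hℓa]
    rw [Algebra.smul_def, map_mul, hfJ]
    rw [Ideal.Quotient.algebraMap_eq]
    rfl
  refine ⟨AlgHom.mk' fRH hsmul, ?_⟩
  intro s a hfa
  have hℓs : ℓ ↑s = ℓ (algebraMap R (FractionRing R) a) := by
    rw [hℓa, ← hfJ s]
    have : fRH s = Ideal.Quotient.mk p a := hfa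
    rw [this]
    rfl
  have h0 : ℓ ((s : FractionRing R) - algebraMap R (FractionRing R) a) = 0 := by
    rw [map_sub, hℓs, sub_self]
  have hc0 := hker _ h0
  rw [mul_sub, sub_eq_zero] at hc0
  rw [hc0, ← map_mul]


set_option maxHeartbeats 4000000 in
set_option synthInstance.maxHeartbeats 1000000 in
/-- Let `R` be a Noetherian reduced ring with exactly two minimal primes
`𝔭₁ ≠ 𝔭₂`, and assume `R/𝔭₁` and `R/𝔭₂` are integrally closed domains.  Then `R` is strictly
closed, and hence `R` is a weakly Arf ring. -/
theorem strictlyClosed_of_two_minimalPrimes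
    (R : Type*) [CommRing R] [IsNoetherianRing R] [IsReduced R]
    (p₁ p₂ : Ideal R) (hne : p₁ ≠ p₂) (hmin : minimalPrimes R = {p₁, p₂})
    (h₁ : IsIntegrallyClosed (R ⧸ p₁)) (h₂ : IsIntegrallyClosed (R ⧸ p₂)) :
    IsStrictlyClosed R ∧ IsWeaklyArf R := by
  have hp₁m : p₁ ∈ minimalPrimes R := by rw [hmin]; exact Set.mem_insert _ _
  have hp₂m : p₂ ∈ minimalPrimes R := by
    rw [hmin]; exact Set.mem_insert_iff.mpr (Or.inr rfl)
  have hp₁ : p₁.IsPrime := hp₁m.1.1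
  have hp₂ : p₂.IsPrime := hp₂m.1.1
  have hle₁ : ¬p₁ ≤ p₂ := fun hle => hne (le_antisymm hle (hp₂m.2 ⟨hp₁, bot_le⟩ hle))
  have hle₂ : ¬p₂ ≤ p₁ := fun hle => hne (le_antisymm (hp₁m.2 ⟨hp₂, bot_le⟩ hle) hle)
  obtain ⟨c₁, hc₁p₁, hc₁p₂⟩ := SetLike.not_le_iff_exists.mp hle₁
  obtain ⟨c₂, hc₂p₂, hc₂p₁⟩ := SetLike.not_le_iff_exists.mp hle₂
  have hinf : p₁ ⊓ p₂ = ⊥ := by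
    refine le_antisymm ?_ bot_le
    intro r hr
    rw [Ideal.mem_bot]
    have hnil : r ∈ nilradical R := by
      rw [nilradical_eq_sInf, Submodule.mem_sInf]
      intro J hJ
      haveI : Ideal.IsPrime J := hJ
      obtain ⟨pm, hpm, hpmle⟩ := Ideal.exists_minimalPrimes_le (I := ⊥) (J := J) bot_le
      have hpm' : pm ∈ minimalPrimes R := hpm
      rw [hmin] at hpm'
      rcases hpm' with h | h
      · exact hpmle (h ▸ hr.1)
      · exact hpmle (h ▸ hr.2)
    rwa [nilradical_eq_zero, Submodule.zero_eq_bot, Submodule.mem_bot] at hnil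
  have hc₁c₂ : c₁ * c₂ = 0 := by
    have : c₁ * c₂ ∈ p₁ ⊓ p₂ :=
      ⟨Ideal.mul_mem_right _ p₁ hc₁p₁, Ideal.mul_mem_left p₂ _ hc₂p₂⟩
    rwa [hinf, Ideal.mem_bot] at this
  have hx0 : c₁ + c₂ ∈ nonZeroDivisors R := by
    refine mem_nonZeroDivisors_iff_right.mpr fun r hr => ?_
    have hrc₁ : r * c₁ = 0 := by
      have h1 : r * c₁ ∈ p₂ := by
        have he : r * c₁ = -(r * c₂) := by linear_combination hr
        rw [he]; exact neg_mem (Ideal.mul_mem_left p₂ r hc₂p₂)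
      have h2 : r * c₁ ∈ p₁ := Ideal.mul_mem_left p₁ r hc₁p₁
      have : r * c₁ ∈ p₁ ⊓ p₂ := ⟨h2, h1⟩
      rwa [hinf, Ideal.mem_bot] at this
    have hrc₂ : r * c₂ = 0 := by linear_combination hr - hrc₁
    have hrp₂ : r ∈ p₂ :=
      ((Ideal.IsPrime.mem_or_mem hp₂ (hrc₁ ▸ p₂.zero_mem)).resolve_right hc₁p₂)
    have hrp₁ : r ∈ p₁ :=
      ((Ideal.IsPrime.mem_or_mem hp₁ (hrc₂ ▸ p₁.zero_mem)).resolve_right hc₂p₁)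
    have : r ∈ p₁ ⊓ p₂ := ⟨hrp₁, hrp₂⟩
    rwa [hinf, Ideal.mem_bot] at this
  obtain ⟨f, hf⟩ := aux_alghom R p₁ p₂ hp₁ hinf c₂ hc₂p₂ hc₂p₁ h₁
  obtain ⟨g, hg⟩ := aux_alghom R p₂ p₁ hp₂ (by rw [inf_comm]; exact hinf) c₁ hc₁p₁ hc₁p₂ h₂
  have hsc : IsStrictlyClosed R := by
    intro s hs
    let q₁ : R ⧸ p₁ →ₐ[R] R ⧸ (p₁ ⊔ p₂) :=
      Ideal.Quotient.liftₐ p₁ (Ideal.Quotient.mkₐ R (p₁ ⊔ p₂)) (fun a ha => by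
        show Ideal.Quotient.mk (p₁ ⊔ p₂) a = 0
        rw [Ideal.Quotient.eq_zero_iff_mem]
        exact Ideal.mem_sup_left ha)
    let q₂ : R ⧸ p₂ →ₐ[R] R ⧸ (p₁ ⊔ p₂) :=
      Ideal.Quotient.liftₐ p₂ (Ideal.Quotient.mkₐ R (p₁ ⊔ p₂)) (fun a ha => by
        show Ideal.Quotient.mk (p₁ ⊔ p₂) a = 0
        rw [Ideal.Quotient.eq_zero_iff_mem]
        exact Ideal.mem_sup_right ha)
    let Φ := Algebra.TensorProduct.lift (q₁.comp f) (q₂.comp g)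
      (fun a b => Commute.all _ _)
    have hΦ := congrArg Φ hs
    rw [Algebra.TensorProduct.lift_tmul, Algebra.TensorProduct.lift_tmul,
      map_one, map_one, mul_one, one_mul] at hΦ
    obtain ⟨a, ha⟩ := Ideal.Quotient.mk_surjective (I := p₁) (f s)
    obtain ⟨b, hb⟩ := Ideal.Quotient.mk_surjective (I := p₂) (g s)
    have hA := hf s a ha.symm
    have hB := hg s b hb.symm
    have hab : a - b ∈ p₁ ⊔ p₂ := by
      have hq₁a : (q₁.comp f) s = Ideal.Quotient.mk (p₁ ⊔ p₂) a := by
        show q₁ (f s) = _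
        rw [← ha]
        show Ideal.Quotient.liftₐ _ _ _ (Ideal.Quotient.mk p₁ a) = _
        rw [Ideal.Quotient.liftₐ_apply]
        rfl
      have hq₂b : (q₂.comp g) s = Ideal.Quotient.mk (p₁ ⊔ p₂) b := by
        show q₂ (g s) = _
        rw [← hb]
        show Ideal.Quotient.liftₐ _ _ _ (Ideal.Quotient.mk p₂ b) = _
        rw [Ideal.Quotient.liftₐ_apply]
        rfl
      have : Ideal.Quotient.mk (p₁ ⊔ p₂) a = Ideal.Quotient.mk (p₁ ⊔ p₂) b := by
        rw [← hq₁a, ← hq₂b]; exact hΦ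
      exact Ideal.Quotient.eq.mp this
    obtain ⟨u', hu', v', hv', huv⟩ := Submodule.mem_sup.mp hab
    refine ⟨a - u', ?_⟩
    have h5 : c₁ * v' = 0 := by
      have : c₁ * v' ∈ p₁ ⊓ p₂ :=
        ⟨Ideal.mul_mem_right _ p₁ hc₁p₁, Ideal.mul_mem_left p₂ _ hv'⟩
      rwa [hinf, Ideal.mem_bot] at this
    have h6 : c₂ * u' = 0 := by
      have : c₂ * u' ∈ p₁ ⊓ p₂ :=
        ⟨Ideal.mul_mem_left p₁ _ hu', Ideal.mul_mem_right _ p₂ hc₂p₂⟩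
      rwa [hinf, Ideal.mem_bot] at this
    have hkey : (c₁ + c₂) * (a - u') = c₁ * b + c₂ * a := by
      linear_combination (-c₁) * huv + h5 - h6
    have hx0unit : IsUnit (algebraMap R (FractionRing R) (c₁ + c₂)) :=
      IsLocalization.map_units (M := nonZeroDivisors R) _ ⟨_, hx0⟩
    apply Subtype.ext
    have hcoe : ((algebraMap R (integralClosure R (FractionRing R)) (a - u') :
        integralClosure R (FractionRing R)) : FractionRing R)
        = algebraMap R (FractionRing R) (a - u') := rfl
    rw [hcoe]
    refine hx0unit.mul_left_cancel ?_
    rw [← map_mul, hkey, map_add, ← hA, ← hB, map_add, add_mul]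
  exact ⟨hsc, isWeaklyArf_of_isStrictlyClosed R hsc⟩
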